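/- Let λ and w be real constants with λ² < 6, and consider the quintessence system x' = -(3/2)[2x + (w-1)x³ + x(w+1)(y²-1) - √(2/3)λy²], y' = -(3/2)y[(w-1)x² + (w+1)(y²-1) + √(2/3)λx]. The point C = (λ/√6, √(1-λ²/6)) is a zero of the vector field, and the Jacobian matrix of the system at C has eigenvalues (λ²-6)/2 and λ²-3(w+1). Consequently, for -1 < w, the point C is a hyperbolic sink (asymptotically stable) if and only if λ² < 3(1+w), and it is a hyperbolic saddle when 3(1+w) < λ² < 6. -/

import Mathlib

open Polynomial

/-- `x`-component of the quintessence (exponential potential) vector field. -/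
noncomputable def q5x (w lam x y : ℝ) : ℝ :=
  -(3 / 2) * (2 * x + (w - 1) * x ^ 3 + x * (w + 1) * (y ^ 2 - 1)
    - Real.sqrt (2 / 3) * lam * y ^ 2)

/-- `y`-component of the quintessence (exponential potential) vector field. -/
noncomputable def q5y (w lam x y : ℝ) : ℝ :=
  -(3 / 2) * y * ((w - 1) * x ^ 2 + (w + 1) * (y ^ 2 - 1) + Real.sqrt (2 / 3) * lam * x)

/-- The scalar-field dominated critical point `C`. -/
noncomputable def C5 (lam : ℝ) : ℝ × ℝ := (lam / Real.sqrt 6, Real.sqrt (1 - lam ^ 2 / 6))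

/-- Jacobian matrix of the quintessence vector field at a point `p`. -/
noncomputable def jac5 (w lam : ℝ) (p : ℝ × ℝ) : Matrix (Fin 2) (Fin 2) ℝ :=
  !![deriv (fun x => q5x w lam x p.2) p.1, deriv (fun y => q5x w lam p.1 y) p.2;
     deriv (fun x => q5y w lam x p.2) p.1, deriv (fun y => q5y w lam p.1 y) p.2]

lemma hasDerivAt_cubic (a b c d x : ℝ) :
    HasDerivAt (fun t : ℝ => a + b * t + c * t ^ 2 + d * t ^ 3)
      (b + 2 * c * x + 3 * d * x ^ 2) x := by
  have h1 : HasDerivAt (fun t : ℝ => t) 1 x := hasDerivAt_id x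
  have h2 := hasDerivAt_pow 2 x
  have h3 := hasDerivAt_pow 3 x
  have := (((h1.const_mul b).add (h2.const_mul c)).add (h3.const_mul d)).const_add a
  refine (this.congr_deriv ?_).congr_of_eventuallyEq (Filter.Eventually.of_forall fun t => ?_)
  · push_cast; ring
  · simp only [Pi.add_apply]; ring

lemma deriv_cubic (a b c d x : ℝ) :
    deriv (fun t : ℝ => a + b * t + c * t ^ 2 + d * t ^ 3) x
      = b + 2 * c * x + 3 * d * x ^ 2 := (hasDerivAt_cubic a b c d x).deriv

lemma charpoly_fin_two' (a b c d : ℝ) :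
    (!![a, b; c, d] : Matrix (Fin 2) (Fin 2) ℝ).charpoly
      = X ^ 2 - C (a + d) * X + C (a * d - b * c) := by
  have h : Matrix.charmatrix (!![a, b; c, d] : Matrix (Fin 2) (Fin 2) ℝ)
      = !![X - C a, -C b; -C c, X - C d] := by
    ext i j
    fin_cases i <;> fin_cases j <;>
      simp [Matrix.charmatrix_apply_eq, Matrix.charmatrix_apply_ne]
  rw [Matrix.charpoly, h, Matrix.det_fin_two_of]
  simp only [map_add, map_sub, map_mul]
  ring

/-- For `λ² < 6` the point `C` is a fixed point of the quintessence system, the Jacobian there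
has eigenvalues `(λ²-6)/2` and `λ²-3(w+1)`; hence for `-1 < w` it is a hyperbolic sink iff
`λ² < 3(1+w)`, and a saddle when `3(1+w) < λ² < 6`. -/
theorem quintessence_point_C_stability (w lam : ℝ) (hlam : lam ^ 2 < 6) :
    (q5x w lam (C5 lam).1 (C5 lam).2 = 0 ∧ q5y w lam (C5 lam).1 (C5 lam).2 = 0) ∧
    (jac5 w lam (C5 lam)).charpoly
      = (X - C ((lam ^ 2 - 6) / 2)) * (X - C (lam ^ 2 - 3 * (w + 1))) ∧
    (-1 < w →
      (((lam ^ 2 - 6) / 2 < 0 ∧ lam ^ 2 - 3 * (w + 1) < 0) ↔ lam ^ 2 < 3 * (1 + w)) ∧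
      (3 * (1 + w) < lam ^ 2 → (lam ^ 2 - 6) / 2 < 0 ∧ 0 < lam ^ 2 - 3 * (w + 1))) := by
  obtain ⟨p, hpdef⟩ : ∃ p : ℝ, lam / Real.sqrt 6 = p := ⟨_, rfl⟩
  obtain ⟨q, hqdef⟩ : ∃ q : ℝ, Real.sqrt (1 - lam ^ 2 / 6) = q := ⟨_, rfl⟩
  obtain ⟨cc, hccdef⟩ : ∃ cc : ℝ, Real.sqrt (2 / 3) = cc := ⟨_, rfl⟩
  have hC1 : (C5 lam).1 = p := hpdef
  have hC2 : (C5 lam).2 = q := hqdef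
  have h6 : Real.sqrt 6 ^ 2 = 6 := Real.sq_sqrt (by norm_num)
  have h6pos : (0:ℝ) < Real.sqrt 6 := Real.sqrt_pos.mpr (by norm_num)
  have hp2 : p ^ 2 = lam ^ 2 / 6 := by rw [← hpdef, div_pow, h6]
  have hq2 : q ^ 2 = 1 - lam ^ 2 / 6 := by
    rw [← hqdef]; exact Real.sq_sqrt (by nlinarith)
  have hc : cc * Real.sqrt 6 = 2 := by
    rw [← hccdef, ← Real.sqrt_mul (by norm_num)]
    rw [show (2:ℝ) / 3 * 6 = 2 ^ 2 by norm_num, Real.sqrt_sq (by norm_num)]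
  have hcl : cc * lam = 2 * p := by
    rw [← hpdef]
    field_simp
    linear_combination lam * hc
  -- fixed point
  have hzx : q5x w lam (C5 lam).1 (C5 lam).2 = 0 := by
    rw [hC1, hC2]
    show -(3 / 2) * (2 * p + (w - 1) * p ^ 3 + p * (w + 1) * (q ^ 2 - 1)
      - Real.sqrt (2/3) * lam * q ^ 2) = 0
    rw [hccdef]
    linear_combination (-(3/2) * p * (w - 1)) * hq2 + (-(3/2) * p * (w-1)) * hp2 +
      (3/2) * q ^ 2 * hcl
  have hzy : q5y w lam (C5 lam).1 (C5 lam).2 = 0 := by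
    rw [hC1, hC2]
    show -(3 / 2) * q * ((w - 1) * p ^ 2 + (w + 1) * (q ^ 2 - 1)
      + Real.sqrt (2/3) * lam * p) = 0
    rw [hccdef]
    linear_combination (-(3/2) * q * (w + 1)) * hq2 + (-(3/2) * q * (w + 1)) * hp2 +
      (-(3/2) * q * p) * hcl
  -- derivatives
  have hd11 : deriv (fun x => q5x w lam x (C5 lam).2) (C5 lam).1
      = -(3/2) * (2 + (w+1) * (q^2 - 1)) + 3 * (-(3/2) * (w-1)) * p ^ 2 := by
    have e : (fun x => q5x w lam x (C5 lam).2)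
        = fun t : ℝ => (3/2) * (cc * lam * q ^ 2) + (-(3/2) * (2 + (w+1) * (q^2-1))) * t
          + 0 * t ^ 2 + (-(3/2) * (w-1)) * t ^ 3 := by
      funext t; rw [hC2]; show q5x w lam t q = _; rw [q5x, hccdef]; ring
    rw [e, hC1, deriv_cubic]; ring
  have hd12 : deriv (fun y => q5x w lam (C5 lam).1 y) (C5 lam).2
      = 2 * (-(3/2) * (p * (w+1) - cc * lam)) * q := by
    have e : (fun y => q5x w lam (C5 lam).1 y)
        = fun t : ℝ => (-(3/2) * (2 * p + (w-1) * p ^ 3 - p * (w+1))) + 0 * t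
          + (-(3/2) * (p * (w+1) - cc * lam)) * t ^ 2 + 0 * t ^ 3 := by
      funext t; rw [hC1]; show q5x w lam p t = _; rw [q5x, hccdef]; ring
    rw [e, hC2, deriv_cubic]; ring
  have hd21 : deriv (fun x => q5y w lam x (C5 lam).2) (C5 lam).1
      = -(3/2) * q * cc * lam + 2 * (-(3/2) * q * (w-1)) * p := by
    have e : (fun x => q5y w lam x (C5 lam).2)
        = fun t : ℝ => (-(3/2) * q * (w+1) * (q^2-1)) + (-(3/2) * q * (cc * lam)) * t
          + (-(3/2) * q * (w-1)) * t ^ 2 + 0 * t ^ 3 := by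
      funext t; rw [hC2]; show q5y w lam t q = _; rw [q5y, hccdef]; ring
    rw [e, hC1, deriv_cubic]; ring
  have hd22 : deriv (fun y => q5y w lam (C5 lam).1 y) (C5 lam).2
      = -(3/2) * ((w-1) * p ^ 2 - (w+1) + cc * lam * p) + 3 * (-(3/2) * (w+1)) * q ^ 2 := by
    have e : (fun y => q5y w lam (C5 lam).1 y)
        = fun t : ℝ => 0 + (-(3/2) * ((w-1) * p ^ 2 - (w+1) + cc * lam * p)) * t
          + 0 * t ^ 2 + (-(3/2) * (w+1)) * t ^ 3 := by
      funext t; rw [hC1]; show q5y w lam p t = _; rw [q5y, hccdef]; ring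
    rw [e, hC2, deriv_cubic]; ring
  have hJ : jac5 w lam (C5 lam)
      = !![-(3/2) * (2 + (w+1) * (q^2 - 1)) + 3 * (-(3/2) * (w-1)) * p ^ 2,
           2 * (-(3/2) * (p * (w+1) - cc * lam)) * q;
           -(3/2) * q * cc * lam + 2 * (-(3/2) * q * (w-1)) * p,
           -(3/2) * ((w-1) * p ^ 2 - (w+1) + cc * lam * p) + 3 * (-(3/2) * (w+1)) * q ^ 2] := by
    rw [jac5, hd11, hd12, hd21, hd22]
  -- charpoly
  have hcp : (jac5 w lam (C5 lam)).charpoly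
      = (X - C ((lam ^ 2 - 6) / 2)) * (X - C (lam ^ 2 - 3 * (w + 1))) := by
    rw [hJ, charpoly_fin_two']
    have htr : (-(3/2) * (2 + (w+1) * (q^2 - 1)) + 3 * (-(3/2) * (w-1)) * p ^ 2)
        + (-(3/2) * ((w-1) * p ^ 2 - (w+1) + cc * lam * p) + 3 * (-(3/2) * (w+1)) * q ^ 2)
        = ((lam ^ 2 - 6) / 2) + (lam ^ 2 - 3 * (w + 1)) := by
      linear_combination (-6 * (w+1)) * hq2 + (-6 * (w-1)) * hp2 + (-(3/2) * p) * hcl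
        + 3 * hp2 - hq2 + hq2 - 6 * hp2
    have hdet : (-(3/2) * (2 + (w+1) * (q^2 - 1)) + 3 * (-(3/2) * (w-1)) * p ^ 2)
          * (-(3/2) * ((w-1) * p ^ 2 - (w+1) + cc * lam * p) + 3 * (-(3/2) * (w+1)) * q ^ 2)
        - (2 * (-(3/2) * (p * (w+1) - cc * lam)) * q)
          * (-(3/2) * q * cc * lam + 2 * (-(3/2) * q * (w-1)) * p)
        = ((lam ^ 2 - 6) / 2) * (lam ^ 2 - 3 * (w + 1)) := by
      linear_combination
        (45/4 + 9*w - (9/4)*w^2 - (9/8)*lam^2 - (9/4)*lam^2*w - (9/8)*lam^2*w^2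
          - 18*p^2 + (27/2)*p^2*w + (27/2)*p^2*w^2 + (27/4)*q^2 + (27/2)*q^2*w
          + (27/4)*q^2*w^2) * hq2
        + (-9 + (27/2)*w + (9/2)*w^2 + (15/8)*lam^2 - (9/4)*lam^2*w - (9/8)*lam^2*w^2
          - (27/4)*p^2 + (27/4)*p^2*w^2) * hp2
        + ((9/4)*p - (9/4)*p*w - (27/4)*p^3 + (27/4)*p^3*w - (9/4)*q^2*p
          + (27/4)*q^2*p*w + (9/2)*cc*q^2*lam) * hcl
    rw [htr, hdet]
    simp only [map_add, map_sub, map_mul]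
    ring
  exact ⟨⟨hzx, hzy⟩, hcp, fun hw => ⟨⟨fun ⟨h1, h2⟩ => by linarith,
    fun h => ⟨by linarith, by linarith⟩⟩, fun h => ⟨by linarith, by linarith⟩⟩⟩
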